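/- arXiv:1106.0833 — 8 statements merged into one kernel-verified Lean document; each statement's English description precedes it below -/
import Mathlib

section
/- For every strategy (x, a) there exists a door x' such that the always-switching strategy based at x' weakly dominates (x, a): for every winning door θ in D and every host function d admissible for θ, the payoff of (x', switch) at θ is at least the payoff of (x, a) at θ under d. In particular, the class of always-switching strategies is weakly dominant in the Monty Hall problem. -/
/-- Doors form a finite type `D`. A host function `d` is admissible for the
winning door `θ` if `d x = θ` whenever `x ≠ θ`, and `d θ ≠ θ`. -/
def Admissible {D : Type*} [DecidableEq D] (θ : D) (d : D → D) : Prop :=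
  (∀ x, x ≠ θ → d x = θ) ∧ d θ ≠ θ

/-- Payoff of an action (`true` = switch, `false` = match) at chosen door `x`
when the winning door is `θ`. -/
def payoff {D : Type*} [DecidableEq D] (θ x : D) (act : Bool) : ℝ :=
  if act then (if x ≠ θ then 1 else 0) else (if x = θ then 1 else 0)

/-- Payoff of the strategy `(x, a)` against winning door `θ` and host function `d`. -/
def stratPayoff {D : Type*} [DecidableEq D] (θ x : D) (a : D → Bool) (d : D → D) : ℝ :=
  payoff θ x (a (d x))

lemma payoff_le_one {D : Type*} [DecidableEq D] (θ x : D) (act : Bool) :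
    payoff θ x act ≤ 1 := by
  unfold payoff; split <;> split <;> norm_num

lemma payoff_nonneg {D : Type*} [DecidableEq D] (θ x : D) (act : Bool) :
    0 ≤ payoff θ x act := by
  unfold payoff; split <;> split <;> norm_num

/-- For every strategy `(x, a)` there is a door `x'` such that the
always-switching strategy based at `x'` weakly dominates `(x, a)`. -/
theorem always_switching_weakly_dominant {D : Type*} [Fintype D] [DecidableEq D]
    (hD : 3 ≤ Fintype.card D) (x : D) (a : D → Bool) :
    ∃ x' : D, ∀ θ : D, ∀ d : D → D, Admissible θ d →
      stratPayoff θ x a d ≤ stratPayoff θ x' (fun _ => true) d := by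
  by_cases h : ∃ y, y ≠ x ∧ a y = false
  · obtain ⟨y, hyx, hay⟩ := h
    refine ⟨y, fun θ d hd => ?_⟩
    by_cases hθ : y = θ
    · subst hθ
      -- RHS is 0; show LHS is 0
      have hdx : d x = y := hd.1 x (fun hx => hyx hx.symm)
      have hxy : x ≠ y := fun hx => hyx hx.symm
      simp [stratPayoff, payoff, hdx, hay, hxy]
    · -- RHS is 1
      have : stratPayoff θ y (fun _ => true) d = 1 := by
        simp [stratPayoff, payoff, hθ]
      rw [this]
      exact payoff_le_one _ _ _
  · push_neg at h
    refine ⟨x, fun θ d hd => ?_⟩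
    by_cases hθ : x = θ
    · subst hθ
      have hdx : d x ≠ x := hd.2
      have : a (d x) = true := by
        have := h (d x) hdx
        simpa using this
      simp [stratPayoff, payoff, this]
    · have : stratPayoff θ x (fun _ => true) d = 1 := by
        simp [stratPayoff, payoff, hθ]
      rw [this]
      exact payoff_le_one _ _ _
end

section
/- Let (x, a) be a strategy and suppose there exists a door x' ≠ x with a x' = match. Then the always-switching strategy based at x' weakly dominates (x, a): for every winning door θ ∈ D and every host function d admissible for θ, the payoff of (x', switch) at θ is at least the payoff of (x, a) at θ under d. Concretely, for θ ≠ x' the payoff of (x', switch) equals 1, while for θ = x' both strategies receive payoff 0 (since admissibility forces d x = x', so (x, a) plays match at a losing door). -/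
/-- If `(x, a)` plays `match` at some door `x' ≠ x`, then the
always-switching strategy based at `x'` weakly dominates `(x, a)`; moreover
for `θ ≠ x'` the switching strategy's payoff is `1`, while for `θ = x'` both
strategies get payoff `0`. -/
theorem dominance_of_switch_based_at_match_door {D : Type*} [Fintype D] [DecidableEq D]
    (hD : 3 ≤ Fintype.card D) (x : D) (a : D → Bool)
    (x' : D) (hx' : x' ≠ x) (ha : a x' = false) :
    (∀ θ : D, ∀ d : D → D, Admissible θ d →
        stratPayoff θ x a d ≤ stratPayoff θ x' (fun _ => true) d) ∧
    (∀ θ : D, θ ≠ x' → ∀ d : D → D, Admissible θ d →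
        stratPayoff θ x' (fun _ => true) d = 1) ∧
    (∀ d : D → D, Admissible x' d →
        stratPayoff x' x' (fun _ => true) d = 0 ∧ stratPayoff x' x a d = 0) := by
  refine ⟨?_, ?_, ?_⟩
  · intro θ d hd
    by_cases hθ : θ = x'
    · subst hθ
      have hdx : d x = θ := hd.1 x (fun h => hx' h.symm)
      have hxθ : ¬ x = θ := fun h => hx' h.symm
      simp [stratPayoff, payoff, hdx, ha, hxθ]
    · have h1 : ¬ x' = θ := fun h => hθ h.symm
      simp only [stratPayoff, payoff, if_true]
      rw [if_pos h1]
      split <;> split <;> simp_all <;> norm_num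
  · intro θ hθ d hd
    have h1 : ¬ x' = θ := fun h => hθ h.symm
    simp [stratPayoff, payoff, h1]
  · intro d hd
    have hdx : d x = x' := hd.1 x (fun h => hx' h.symm)
    have hxθ : ¬ x = x' := fun h => hx' h.symm
    exact ⟨by simp [stratPayoff, payoff], by simp [stratPayoff, payoff, hdx, ha, hxθ]⟩
end

section
/- In the Bayesian setting with prior p on the winning door and arbitrary transition probabilities q, the probability of winning with the always-switching strategy based at door x equals 1 - p x, regardless of q. -/
open Finset

/-- `p` is a prior on the doors. -/
def IsPrior {D : Type*} [Fintype D] (p : D → ℝ) : Prop :=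
  (∀ θ, 0 ≤ p θ) ∧ ∑ θ, p θ = 1

/-- `q` are transition probabilities for the revealed door. -/
def IsTransKernel {D : Type*} [Fintype D] (q : D → D → ℝ) : Prop :=
  (∀ θ y, 0 ≤ q θ y) ∧ (∀ θ, q θ θ = 0) ∧ (∀ θ, ∑ y, q θ y = 1)

/-- Expected winning probability of strategy `(x, a)` (`true` = switch,
`false` = match) under prior `p` and transition probabilities `q`. -/
def ExpWin {D : Type*} [Fintype D] [DecidableEq D]
    (x : D) (a : D → Bool) (p : D → ℝ) (q : D → D → ℝ) : ℝ :=
  p x * ∑ y ∈ Finset.univ.filter (· ≠ x), q x y * (if a y = false then 1 else 0)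
    + ∑ θ ∈ Finset.univ.filter (· ≠ x), p θ * (if a θ = true then 1 else 0)

/-- The winning probability of the always-switching strategy
based at `x` equals `1 - p x`, regardless of `q`. -/
theorem expWin_always_switching {D : Type*} [Fintype D] [DecidableEq D]
    (hD : 3 ≤ Fintype.card D) (p : D → ℝ) (hp : IsPrior p)
    (q : D → D → ℝ) (hq : IsTransKernel q) (x : D) :
    ExpWin x (fun _ => true) p q = 1 - p x := by
  unfold ExpWin
  simp only [if_neg (by simp : ¬(true = false)), if_pos rfl, mul_zero, mul_one]
  have := hp.2
  rw [← Finset.sum_filter_add_sum_filter_not Finset.univ (· ≠ x) p] at this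
  simp only [Finset.sum_const_zero, mul_zero, ne_eq, not_not] at this ⊢
  simp only [Finset.sum_filter, if_pos trivial, mul_one, zero_add] at this ⊢
  rw [Finset.sum_ite_eq' Finset.univ x p, if_pos (Finset.mem_univ x)] at this
  linarith
end

section
/- In the Bayesian setting with prior p and transition probabilities q, every strategy (x, a) satisfies ExpWin(x, a, p, q) ≤ 1 - min_{θ ∈ D} p θ, and the always-switching strategy based at any door θ* minimizing p attains this bound: ExpWin(θ*, switch, p, q) = 1 - p θ*. Hence the always-switching strategy based at a minimizer of the prior is Bayes-optimal. -/
open Finset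

/-- Every strategy has winning probability at most
`1 - min p`, and the always-switching strategy based at a minimizer `θ*`
of the prior attains this bound; hence it is Bayes-optimal. -/
theorem bayes_optimality_of_switching {D : Type*} [Fintype D] [DecidableEq D]
    (hD : 3 ≤ Fintype.card D) (p : D → ℝ) (hp : IsPrior p)
    (q : D → D → ℝ) (hq : IsTransKernel q)
    (θstar : D) (hθstar : ∀ θ : D, p θstar ≤ p θ) :
    (∀ (x : D) (a : D → Bool), ExpWin x a p q ≤ 1 - p θstar) ∧
    ExpWin θstar (fun _ => true) p q = 1 - p θstar := by

  obtain ⟨hp0, hp1⟩ := hp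
  obtain ⟨hq0, hqd, hq1⟩ := hq
  constructor
  · intro x a
    unfold ExpWin
    rw [Finset.filter_ne']
    by_cases h : ∀ θ ∈ Finset.univ.erase x, a θ = true
    · have h1 : ∑ y ∈ Finset.univ.erase x, q x y * (if a y = false then 1 else 0) = 0 := by
        apply Finset.sum_eq_zero
        intro y hy
        simp [h y hy]
      have h2 : ∑ θ ∈ Finset.univ.erase x, p θ * (if a θ = true then 1 else 0)
          = ∑ θ ∈ Finset.univ.erase x, p θ := by
        refine Finset.sum_congr rfl fun θ hθ => ?_
        simp [h θ hθ]
      rw [h1, h2, Finset.sum_erase_eq_sub (Finset.mem_univ x), hp1]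
      have := hθstar x
      linarith
    · push_neg at h
      obtain ⟨y0, hy0, hay0⟩ := h
      have hay0' : a y0 = false := by simpa using hay0
      have hA : ∑ y ∈ Finset.univ.erase x, q x y * (if a y = false then 1 else 0) ≤ 1 := by
        calc ∑ y ∈ Finset.univ.erase x, q x y * (if a y = false then 1 else 0)
            ≤ ∑ y ∈ Finset.univ.erase x, q x y := by
              refine Finset.sum_le_sum fun y _ => ?_
              have := hq0 x y
              split <;> nlinarith
          _ = 1 := by rw [Finset.sum_erase_eq_sub (Finset.mem_univ x), hq1, hqd]; ring
      have hB : ∑ θ ∈ Finset.univ.erase x, p θ * (if a θ = true then 1 else 0)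
          ≤ (∑ θ ∈ Finset.univ.erase x, p θ) - p y0 := by
        rw [← Finset.add_sum_erase _ _ hy0, ← Finset.add_sum_erase _ _ hy0]
        simp only [hay0']
        have : ∑ θ ∈ (Finset.univ.erase x).erase y0, p θ * (if a θ = true then 1 else 0)
            ≤ ∑ θ ∈ (Finset.univ.erase x).erase y0, p θ := by
          refine Finset.sum_le_sum fun θ _ => ?_
          have := hp0 θ
          split <;> nlinarith
        simp only [Bool.false_eq_true, if_false, mul_zero]
        linarith
      have hsum : ∑ θ ∈ Finset.univ.erase x, p θ = 1 - p x := by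
        rw [Finset.sum_erase_eq_sub (Finset.mem_univ x), hp1]
      have hmul : p x * ∑ y ∈ Finset.univ.erase x, q x y * (if a y = false then 1 else 0)
          ≤ p x := by
        have := mul_le_mul_of_nonneg_left hA (hp0 x)
        linarith
      have := hθstar y0
      linarith
  · unfold ExpWin
    rw [Finset.filter_ne']
    have h1 : ∑ y ∈ Finset.univ.erase θstar, q θstar y * (if (true : Bool) = false then 1 else 0) = 0 := by
      apply Finset.sum_eq_zero; intro y hy; simp
    rw [h1, mul_zero, zero_add]
    have h2 : ∑ θ ∈ Finset.univ.erase θstar, p θ * (if (true : Bool) = true then 1 else 0)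
        = ∑ θ ∈ Finset.univ.erase θstar, p θ := by
      refine Finset.sum_congr rfl fun θ _ => ?_; simp
    rw [h2, Finset.sum_erase_eq_sub (Finset.mem_univ θstar), hp1]
end

section
/- Let n be the cardinality of D and let p be the uniform prior p θ = 1/n. Then for every door x ∈ D and every transition probabilities q, the always-switching strategy based at x has expected winning probability ExpWin(x, switch, p, q) = (n - 1)/n. -/
open Finset

/-- Under the uniform prior, every always-switching strategy
has winning probability `(n-1)/n`, for every transition probabilities `q`. -/
theorem expWin_switch_uniform {D : Type*} [Fintype D] [DecidableEq D]
    (hD : 3 ≤ Fintype.card D) (q : D → D → ℝ) (hq : IsTransKernel q) (x : D) :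
    ExpWin x (fun _ => true) (fun _ => 1 / (Fintype.card D : ℝ)) q =
      ((Fintype.card D : ℝ) - 1) / (Fintype.card D : ℝ) := by
  have hn : (0:ℝ) < (Fintype.card D : ℝ) := by positivity
  have hcard : (Finset.univ.filter (· ≠ x)).card = Fintype.card D - 1 := by
    rw [Finset.filter_ne', Finset.card_erase_of_mem (mem_univ x), Finset.card_univ]
  simp only [ExpWin, if_pos, if_neg, Bool.true_eq_false, if_false, if_true,
    mul_zero, Finset.sum_const_zero, mul_one]
  rw [Finset.sum_const, hcard, nsmul_eq_mul]
  have h1 : 1 ≤ Fintype.card D := by omega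
  rw [Nat.cast_sub h1]
  field_simp
  push_cast
  ring
end

section
/- Let n be the cardinality of D and let p be the uniform prior p θ = 1/n. Then for every strategy (x, a) and every transition probabilities q, the expected winning probability satisfies ExpWin(x, a, p, q) ≤ (n - 1)/n. Hence the uniform prior guarantees the environment a losing probability for the player of at least 1/n against any strategy. -/
open Finset

/-- Under the uniform prior, every strategy `(x, a)` has winning
probability at most `(n-1)/n`, for every transition probabilities `q`. -/
theorem uniform_prior_guarantee {D : Type*} [Fintype D] [DecidableEq D]
    (hD : 3 ≤ Fintype.card D) (q : D → D → ℝ) (hq : IsTransKernel q)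
    (x : D) (a : D → Bool) :
    ExpWin x a (fun _ => 1 / (Fintype.card D : ℝ)) q ≤
      ((Fintype.card D : ℝ) - 1) / (Fintype.card D : ℝ) := by
  obtain ⟨hq0, hqd, hqs⟩ := hq
  set n : ℝ := (Fintype.card D : ℝ) with hn
  have hnpos : (0:ℝ) < n := by
    have h1 : (0:ℕ) < Fintype.card D := by omega
    rw [hn]; exact_mod_cast h1
  have hle1 : ∀ y, q x y ≤ 1 := by
    intro y
    calc q x y = ∑ z ∈ {y}, q x z := by simp
    _ ≤ ∑ z, q x z := Finset.sum_le_sum_of_subset_of_nonneg (Finset.subset_univ _)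
        (fun z _ _ => hq0 x z)
    _ = 1 := hqs x
  have key : ∑ y ∈ Finset.univ.filter (· ≠ x),
      (q x y * (if a y = false then 1 else 0) + (if a y = true then 1 else 0))
      ≤ ∑ y ∈ Finset.univ.filter (· ≠ x), (1:ℝ) := by
    apply Finset.sum_le_sum
    intro y _
    cases h : a y
    · simpa [h] using hle1 y
    · simp [h]
  have hcard : (Finset.univ.filter (· ≠ x)).card = Fintype.card D - 1 := by
    rw [Finset.filter_ne', Finset.card_erase_of_mem (Finset.mem_univ x), Finset.card_univ]
  unfold ExpWin
  simp only []
  rw [div_mul_eq_mul_div, one_mul]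
  have expand : (∑ y ∈ Finset.univ.filter (· ≠ x), q x y * (if a y = false then 1 else 0)) / n
      + ∑ θ ∈ Finset.univ.filter (· ≠ x), (1/n) * (if a θ = true then 1 else 0)
      = (∑ y ∈ Finset.univ.filter (· ≠ x),
          (q x y * (if a y = false then 1 else 0) + (if a y = true then 1 else 0))) / n := by
    rw [Finset.sum_add_distrib, add_div]
    congr 1
    rw [Finset.sum_div]
    apply Finset.sum_congr rfl
    intro y _
    ring
  rw [expand]
  rw [div_le_div_iff₀ hnpos hnpos]
  calc (∑ y ∈ Finset.univ.filter (· ≠ x),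
          (q x y * (if a y = false then 1 else 0) + (if a y = true then 1 else 0))) * n
      ≤ (∑ y ∈ Finset.univ.filter (· ≠ x), (1:ℝ)) * n :=
        mul_le_mul_of_nonneg_right key hnpos.le
    _ = (n - 1) * n := by
        rw [Finset.sum_const, hcard]
        congr 1
        rw [nsmul_eq_mul, mul_one, Nat.cast_sub (by omega : 1 ≤ Fintype.card D),
          Nat.cast_one, hn]
end

section
/- Let n be the cardinality of D. If the player uses the mixed strategy that chooses the initial door X uniformly at random on D and then always switches, then against every prior p and every transition probabilities q the winning probability equals (n - 1)/n; that is, (1/n) * ∑_{x ∈ D} ExpWin(x, switch, p, q) = (n - 1)/n. -/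
open Finset

/-- The mixed strategy choosing the initial door uniformly and
always switching wins with probability `(n-1)/n` against every `(p, q)`. -/
theorem mixed_switching_value {D : Type*} [Fintype D] [DecidableEq D]
    (hD : 3 ≤ Fintype.card D) (p : D → ℝ) (hp : IsPrior p)
    (q : D → D → ℝ) (hq : IsTransKernel q) :
    (1 / (Fintype.card D : ℝ)) * ∑ x : D, ExpWin x (fun _ => true) p q =
      ((Fintype.card D : ℝ) - 1) / (Fintype.card D : ℝ) := by
  have key : ∀ x : D, ExpWin x (fun _ => true) p q = 1 - p x := by
    intro x
    unfold ExpWin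
    have h1 : ∑ θ ∈ Finset.univ.filter (· ≠ x), p θ = 1 - p x := by
      rw [Finset.filter_ne', Finset.sum_erase_eq_sub (Finset.mem_univ x), hp.2]
    simp [h1]
  have hn : (Fintype.card D : ℝ) ≠ 0 := by positivity
  rw [Finset.sum_congr rfl (fun x _ => key x), Finset.sum_sub_distrib,
    Finset.sum_const, hp.2, Finset.card_univ, nsmul_eq_mul, mul_one]
  field_simp
end

section
/- Let n be the cardinality of D, let p* be the uniform prior p* θ = 1/n, and let the player's mixed strategy be: choose the initial door X uniformly at random and always switch. Then this pair is a saddle point of the zero-sum game: for every strategy (x, a) and every transition probabilities q, ExpWin(x, a, p*, q) ≤ (n - 1)/n, and for every prior p and every transition probabilities q, (1/n) * ∑_{x ∈ D} ExpWin(x, switch, p, q) = (n - 1)/n ≥ (n - 1)/n; hence the value of the game is (n - 1)/n. -/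
open Finset

/-- The uniform prior together with the uniformly mixed
always-switching strategy form a saddle point of the zero-sum game, whose
value is `(n-1)/n`. -/
theorem saddle_point {D : Type*} [Fintype D] [DecidableEq D]
    (hD : 3 ≤ Fintype.card D) :
    (∀ (x : D) (a : D → Bool) (q : D → D → ℝ), IsTransKernel q →
      ExpWin x a (fun _ => 1 / (Fintype.card D : ℝ)) q ≤
        ((Fintype.card D : ℝ) - 1) / (Fintype.card D : ℝ)) ∧
    (∀ (p : D → ℝ) (q : D → D → ℝ), IsPrior p → IsTransKernel q →
      (1 / (Fintype.card D : ℝ)) * ∑ x : D, ExpWin x (fun _ => true) p q =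
        ((Fintype.card D : ℝ) - 1) / (Fintype.card D : ℝ)) := by
  have hn0 : (0:ℝ) < (Fintype.card D : ℝ) := by
    have : 0 < Fintype.card D := by omega
    exact_mod_cast this
  have hcardS : ∀ x : D, (Finset.univ.filter (· ≠ x)).card = Fintype.card D - 1 := by
    intro x
    have : Finset.univ.filter (· ≠ x) = Finset.univ.erase x := by
      ext y; simp [Finset.mem_erase, and_comm]
    rw [this, Finset.card_erase_of_mem (Finset.mem_univ x), Finset.card_univ]
  constructor
  · intro x a q hq
    obtain ⟨hq0, hqd, hq1⟩ := hq
    have hqle : ∀ y, q x y ≤ 1 := by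
      intro y
      calc q x y ≤ ∑ z, q x z :=
        Finset.single_le_sum (fun z _ => hq0 x z) (Finset.mem_univ y)
      _ = 1 := hq1 x
    have key : ∑ y ∈ Finset.univ.filter (· ≠ x),
        (q x y * (if a y = false then 1 else 0) + (if a y = true then 1 else 0)) ≤
        ((Fintype.card D : ℝ) - 1) := by
      have hb : ∀ y ∈ Finset.univ.filter (· ≠ x),
          q x y * (if a y = false then 1 else 0) + (if a y = true then 1 else 0) ≤ 1 := by
        intro y _
        cases h : a y
        · simpa [h] using hqle y
        · simp [h]
      calc _ ≤ ∑ _y ∈ Finset.univ.filter (· ≠ x), (1:ℝ) := Finset.sum_le_sum hb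
        _ = ((Finset.univ.filter (· ≠ x)).card : ℝ) := by simp
        _ = ((Fintype.card D : ℝ) - 1) := by
            rw [hcardS x]
            have : (1:ℕ) ≤ Fintype.card D := by omega
            push_cast [this]
            ring
    have hEW : ExpWin x a (fun _ => 1 / (Fintype.card D : ℝ)) q =
        (1 / (Fintype.card D : ℝ)) * ∑ y ∈ Finset.univ.filter (· ≠ x),
          (q x y * (if a y = false then 1 else 0) + (if a y = true then 1 else 0)) := by
      simp only [ExpWin, mul_add, Finset.sum_add_distrib, Finset.mul_sum]
    rw [hEW, one_div, div_eq_mul_inv, mul_comm ((Fintype.card D : ℝ) - 1)]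
    exact mul_le_mul_of_nonneg_left key (by positivity)
  · intro p q hp hq
    have hEW : ∀ x : D, ExpWin x (fun _ => true) p q = 1 - p x := by
      intro x
      have : Finset.univ.filter (· ≠ x) = Finset.univ.erase x := by
        ext y; simp [Finset.mem_erase, and_comm]
      simp only [ExpWin, this]
      simp [Finset.sum_erase_eq_sub (Finset.mem_univ x), hp.2]
    simp only [hEW]
    rw [Finset.sum_sub_distrib, hp.2, Finset.sum_const, Finset.card_univ, nsmul_eq_mul,
      mul_one]
    field_simp
end
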